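/- Derivation of a comparison inequality: let u, v satisfy (in the weak sense) −div(A(|∇u|)∇u) + B(|∇u|) = f(u) and the analogous equation for v in Ω' ⊂ ℝᴺ, with f Lipschitz with constant L_f, and suppose there are constants C₁ > 0 and Θ ≥ 0 such that (A(|η|)η − A(|η'|)η')·(η−η') ≥ C₁ A(|η|+|η'|)|η−η'|² for all η,η' ∈ ℝᴺ and |B(|∇u|) − B(|∇v|)| ≤ Θ (|∇u|+|∇v|) A(|∇u|+|∇v|) |∇u − ∇v| pointwise. Then, setting w = (u−v)⁺ and using w as a test function, for every ϑ ∈ (0, C₁) one obtains ∫_{Ω'} A(|∇u|+|∇v|)|∇w|² dx ≤ (L_f + C(ϑ))/(C₁ − ϑ) ∫_{Ω'} w² dx, where C(ϑ) = Θ² · sup_{Ω'}((|∇u|+|∇v|)² A(|∇u|+|∇v|)) / (4ϑ). -/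
import Mathlib


open MeasureTheory

/-- Derivation of the comparison inequality: from the test-function identity for
`w = (u-v)⁺`, the ellipticity of `A`, the pointwise bound on the `B`-difference and the
Lipschitz continuity of `f`, one deduces, for every `ϑ ∈ (0, C₁)`,
`∫ A(|∇u|+|∇v|)|∇w|² ≤ (L_f + Θ²S/(4ϑ))/(C₁-ϑ) ∫ w²`. -/
theorem stmt9 {α : Type*} [MeasurableSpace α] (μ : Measure α) {N : ℕ}
    (A B f : ℝ → ℝ) (u v : α → ℝ)
    (Du Dv : α → EuclideanSpace ℝ (Fin N))
    (C₁ Θ Lf ϑ S : ℝ) (hC₁ : 0 < C₁) (hΘ : 0 ≤ Θ) (hLf : 0 ≤ Lf)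
    (hϑ : 0 < ϑ) (hϑC₁ : ϑ < C₁)
    -- `w = (u-v)⁺` and its gradient `Dw = ∇u - ∇v` (on the support of `w`)
    (w : α → ℝ) (hw : w = fun x => max (u x - v x) 0)
    (Dw : α → EuclideanSpace ℝ (Fin N)) (hDw : ∀ x, Dw x = Du x - Dv x)
    -- the test-function identity obtained by testing both equations with `w`
    (hId : (∫ x, @inner ℝ _ _ (A ‖Du x‖ • Du x - A ‖Dv x‖ • Dv x) (Dw x) ∂μ)
        + (∫ x, (B ‖Du x‖ - B ‖Dv x‖) * w x ∂μ)
        = ∫ x, (f (u x) - f (v x)) * w x ∂μ)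
    -- ellipticity of the operator
    (hell : ∀ x, C₁ * (A (‖Du x‖ + ‖Dv x‖) * ‖Dw x‖ ^ 2)
        ≤ @inner ℝ _ _ (A ‖Du x‖ • Du x - A ‖Dv x‖ • Dv x) (Dw x))
    -- pointwise bound on the difference of the `B`-terms
    (hB : ∀ x, |B ‖Du x‖ - B ‖Dv x‖|
        ≤ Θ * ((‖Du x‖ + ‖Dv x‖) * A (‖Du x‖ + ‖Dv x‖)) * ‖Dw x‖)
    -- `f` is Lipschitz with constant `L_f`
    (hf : ∀ a b : ℝ, |f a - f b| ≤ Lf * |a - b|)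
    -- `S` bounds `(|∇u|+|∇v|)² A(|∇u|+|∇v|)` on `Ω'`
    (hS : ∀ x, (‖Du x‖ + ‖Dv x‖) ^ 2 * A (‖Du x‖ + ‖Dv x‖) ≤ S)
    (hApos : ∀ t : ℝ, 0 ≤ t → 0 ≤ A t)
    -- integrability of all the relevant quantities
    (hint1 : Integrable (fun x => A (‖Du x‖ + ‖Dv x‖) * ‖Dw x‖ ^ 2) μ)
    (hint2 : Integrable (fun x => (w x) ^ 2) μ)
    (hint3 : Integrable (fun x =>
      @inner ℝ _ _ (A ‖Du x‖ • Du x - A ‖Dv x‖ • Dv x) (Dw x)) μ)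
    (hint4 : Integrable (fun x => (B ‖Du x‖ - B ‖Dv x‖) * w x) μ) :
    ∫ x, A (‖Du x‖ + ‖Dv x‖) * ‖Dw x‖ ^ 2 ∂μ
      ≤ (Lf + Θ ^ 2 * S / (4 * ϑ)) / (C₁ - ϑ) * ∫ x, (w x) ^ 2 ∂μ := by

  have hwnn : ∀ x, 0 ≤ w x := fun x => by rw [hw]; exact le_max_right _ _
  have hW : 0 ≤ ∫ x, (w x) ^ 2 ∂μ := integral_nonneg fun x => sq_nonneg _
  set c : ℝ := Θ ^ 2 * S / (4 * ϑ) with hc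
  -- pointwise bound on the B term
  have hBpt : ∀ x, -((B ‖Du x‖ - B ‖Dv x‖) * w x)
      ≤ ϑ * (A (‖Du x‖ + ‖Dv x‖) * ‖Dw x‖ ^ 2) + c * (w x) ^ 2 := by
    intro x
    set t : ℝ := ‖Du x‖ + ‖Dv x‖ with ht
    have hA : 0 ≤ A t := hApos t (by positivity)
    have h1 : -((B ‖Du x‖ - B ‖Dv x‖) * w x)
        ≤ Θ * (t * A t) * ‖Dw x‖ * w x := by
      have := hB x
      have habs : -((B ‖Du x‖ - B ‖Dv x‖) * w x)
          ≤ |B ‖Du x‖ - B ‖Dv x‖| * w x := by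
        have := neg_abs_le (B ‖Du x‖ - B ‖Dv x‖)
        nlinarith [hwnn x, abs_nonneg (B ‖Du x‖ - B ‖Dv x‖)]
      calc -((B ‖Du x‖ - B ‖Dv x‖) * w x) ≤ |B ‖Du x‖ - B ‖Dv x‖| * w x := habs
        _ ≤ Θ * (t * A t) * ‖Dw x‖ * w x :=
          mul_le_mul_of_nonneg_right (hB x) (hwnn x)
    have h2 : Θ * (t * A t) * ‖Dw x‖ * w x
        ≤ ϑ * (A t * ‖Dw x‖ ^ 2) + c * (w x) ^ 2 := by
      have h4 : (0:ℝ) < 4 * ϑ := by linarith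
      have hsq : 0 ≤ A t * (2 * ϑ * ‖Dw x‖ - Θ * t * w x) ^ 2 :=
        mul_nonneg hA (sq_nonneg _)
      have hS' : Θ ^ 2 * (w x) ^ 2 * (t ^ 2 * A t) ≤ Θ ^ 2 * (w x) ^ 2 * S :=
        mul_le_mul_of_nonneg_left (hS x) (by positivity)
      rw [hc, div_mul_eq_mul_div, ← sub_le_iff_le_add', le_div_iff₀ h4]
      nlinarith [hsq, hS']
    calc -((B ‖Du x‖ - B ‖Dv x‖) * w x) ≤ Θ * (t * A t) * ‖Dw x‖ * w x := h1
      _ ≤ ϑ * (A t * ‖Dw x‖ ^ 2) + c * (w x) ^ 2 := h2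
  -- pointwise bound on the f term
  have hfpt : ∀ x, (f (u x) - f (v x)) * w x ≤ Lf * (w x) ^ 2 := by
    intro x
    have hwx : w x = max (u x - v x) 0 := by rw [hw]
    rcases le_or_gt (u x - v x) 0 with h | h
    · rw [hwx, max_eq_right h]; simp
    · have hwe : w x = u x - v x := by rw [hwx, max_eq_left h.le]
      calc (f (u x) - f (v x)) * w x
          ≤ |f (u x) - f (v x)| * w x :=
            mul_le_mul_of_nonneg_right (le_abs_self _) (hwnn x)
        _ ≤ (Lf * |u x - v x|) * w x :=
            mul_le_mul_of_nonneg_right (hf _ _) (hwnn x)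
        _ = Lf * (w x) ^ 2 := by rw [hwe, abs_of_pos h]; ring
  -- step 1: ellipticity
  have step1 : C₁ * ∫ x, A (‖Du x‖ + ‖Dv x‖) * ‖Dw x‖ ^ 2 ∂μ
      ≤ ∫ x, @inner ℝ _ _ (A ‖Du x‖ • Du x - A ‖Dv x‖ • Dv x) (Dw x) ∂μ := by
    rw [← integral_const_mul]
    exact integral_mono (hint1.const_mul C₁) hint3 hell
  -- step 3: f-term bound
  have step3 : (∫ x, (f (u x) - f (v x)) * w x ∂μ) ≤ Lf * ∫ x, (w x) ^ 2 ∂μ := by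
    by_cases hI : Integrable (fun x => (f (u x) - f (v x)) * w x) μ
    · rw [← integral_const_mul]
      exact integral_mono hI (hint2.const_mul Lf) hfpt
    · rw [integral_undef hI]
      exact mul_nonneg hLf hW
  -- step 4: B-term bound
  have step4 : -(∫ x, (B ‖Du x‖ - B ‖Dv x‖) * w x ∂μ)
      ≤ ϑ * (∫ x, A (‖Du x‖ + ‖Dv x‖) * ‖Dw x‖ ^ 2 ∂μ) + c * ∫ x, (w x) ^ 2 ∂μ := by
    rw [← integral_neg, ← integral_const_mul, ← integral_const_mul, ← integral_add
      (hint1.const_mul ϑ) (hint2.const_mul c)]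
    exact integral_mono hint4.neg ((hint1.const_mul ϑ).add (hint2.const_mul c)) hBpt
  -- combine
  have hmain : (C₁ - ϑ) * (∫ x, A (‖Du x‖ + ‖Dv x‖) * ‖Dw x‖ ^ 2 ∂μ)
      ≤ (Lf + c) * ∫ x, (w x) ^ 2 ∂μ := by nlinarith [step1, step3, step4, hId]
  rw [div_mul_eq_mul_div, le_div_iff₀ (by linarith : (0:ℝ) < C₁ - ϑ)]
  nlinarith [hmain]
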